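/- arXiv:math/0306438 — 2 statements merged into one kernel-verified Lean document; each statement's English description precedes it below -/
import Mathlib

section
/- Let G be an abelian group and h : G → ℝ a function such that there exists a constant C with |h(x + y) + h(x - y) - 2h(x) - 2h(y)| ≤ C for all x, y ∈ G. Then the limit ĥ(x) := lim_{n→∞} h(2^n x)/4^n exists for every x ∈ G. -/
/-- Tate's limiting process: if `h` satisfies a quasi-parallelogram law, then
`lim_{n→∞} h(2^n x)/4^n` exists for every `x`. -/
theorem stmt_0 {G : Type*} [AddCommGroup G] (h : G → ℝ) (C : ℝ)
    (hq : ∀ x y : G, |h (x + y) + h (x - y) - 2 * h x - 2 * h y| ≤ C) :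
    ∀ x : G, ∃ l : ℝ,
      Filter.Tendsto (fun n : ℕ => h ((2 ^ n : ℕ) • x) / (4 : ℝ) ^ n)
        Filter.atTop (nhds l) := by
  intro x
  have key : ∀ z : G, |h (z + z) - 4 * h z| ≤ C + |h 0| := by
    intro z
    have := hq z z
    simp only [sub_self] at this
    calc |h (z + z) - 4 * h z| = |(h (z + z) + h 0 - 2 * h z - 2 * h z) + (- h 0)| := by
          ring_nf
      _ ≤ |h (z + z) + h 0 - 2 * h z - 2 * h z| + |(- h 0)| := abs_add_le _ _
      _ ≤ C + |h 0| := by rw [abs_neg]; exact add_le_add this le_rfl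
  set f : ℕ → ℝ := fun n => h ((2 ^ n : ℕ) • x) / (4 : ℝ) ^ n with hf
  have hc : CauchySeq f := by
    apply cauchySeq_of_le_geometric (1/4) ((C + |h 0|) / 4) (by norm_num)
    intro n
    have h2 : ((2 ^ (n+1) : ℕ) • x) = (2 ^ n : ℕ) • x + (2 ^ n : ℕ) • x := by
      rw [← add_nsmul]; ring_nf
    rw [Real.dist_eq]
    have h4 : (4 : ℝ) ^ n ≠ 0 := by positivity
    have : f n - f (n+1) = (4 * h ((2 ^ n : ℕ) • x) - h ((2 ^ n : ℕ) • x + (2 ^ n : ℕ) • x))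
        / (4 : ℝ) ^ (n+1) := by
      simp only [hf, h2]
      field_simp
      ring
    rw [this, abs_div, abs_of_pos (by positivity : (0:ℝ) < (4:ℝ)^(n+1)),
      div_le_iff₀ (by positivity)]
    have := key ((2 ^ n : ℕ) • x)
    rw [abs_sub_comm] at this
    calc |4 * h ((2 ^ n : ℕ) • x) - h ((2 ^ n : ℕ) • x + (2 ^ n : ℕ) • x)| ≤ C + |h 0| :=
          this
      _ = (C + |h 0|) / 4 * 4 := by ring
      _ ≤ (C + |h 0|) / 4 * 4 * ((1/4)^n * 4^n) := by
          rw [← mul_pow]; norm_num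
      _ = (C + |h 0|) / 4 * (1/4)^n * 4^(n+1) := by ring
  obtain ⟨l, hl⟩ := cauchySeq_tendsto_of_complete hc
  exact ⟨l, hl⟩
end

section
/- Let G be an abelian group and h : G → ℝ satisfy the quasi-parallelogram law |h(x + y) + h(x - y) - 2h(x) - 2h(y)| ≤ C. Then the canonical height ĥ(x) := lim_{n→∞} h(2^n x)/4^n satisfies the exact parallelogram law: ĥ(x + y) + ĥ(x - y) = 2ĥ(x) + 2ĥ(y) for all x, y ∈ G. -/
/-- The canonical height obtained by Tate's limiting process satisfies the
exact parallelogram law. -/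
theorem stmt_2 {G : Type*} [AddCommGroup G] (h : G → ℝ) (C : ℝ)
    (hq : ∀ x y : G, |h (x + y) + h (x - y) - 2 * h x - 2 * h y| ≤ C)
    (hhat : G → ℝ)
    (hlim : ∀ x : G,
      Filter.Tendsto (fun n : ℕ => h ((2 ^ n : ℕ) • x) / (4 : ℝ) ^ n)
        Filter.atTop (nhds (hhat x))) :
    ∀ x y : G, hhat (x + y) + hhat (x - y) = 2 * hhat x + 2 * hhat y := by
  intro x y
  set f : ℕ → ℝ := fun n =>
    h ((2 ^ n : ℕ) • (x + y)) / (4 : ℝ) ^ n + h ((2 ^ n : ℕ) • (x - y)) / (4 : ℝ) ^ n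
      - 2 * (h ((2 ^ n : ℕ) • x) / (4 : ℝ) ^ n) - 2 * (h ((2 ^ n : ℕ) • y) / (4 : ℝ) ^ n)
    with hf
  have key : Filter.Tendsto f Filter.atTop
      (nhds (hhat (x + y) + hhat (x - y) - 2 * hhat x - 2 * hhat y)) :=
    (((hlim (x + y)).add (hlim (x - y))).sub ((hlim x).const_mul 2)).sub
      ((hlim y).const_mul 2)
  have hzero : Filter.Tendsto f Filter.atTop (nhds 0) := by
    have hbound : ∀ n : ℕ, ‖f n‖ ≤ C * (1 / 4 : ℝ) ^ n := by
      intro n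
      have h4 : (0 : ℝ) < (4 : ℝ) ^ n := by positivity
      have hqn := hq ((2 ^ n : ℕ) • x) ((2 ^ n : ℕ) • y)
      rw [← smul_add, ← smul_sub] at hqn
      have : f n = (h ((2 ^ n : ℕ) • (x + y)) + h ((2 ^ n : ℕ) • (x - y))
          - 2 * h ((2 ^ n : ℕ) • x) - 2 * h ((2 ^ n : ℕ) • y)) / (4 : ℝ) ^ n := by
        simp only [hf]; ring
      rw [this, Real.norm_eq_abs, abs_div, abs_of_pos h4, div_le_iff₀ h4]
      calc _ ≤ C := hqn
        _ = C * (1 / 4 : ℝ) ^ n * (4 : ℝ) ^ n := by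
          rw [div_pow, one_pow, mul_assoc, div_mul_cancel₀ _ h4.ne', mul_one]
    have hg : Filter.Tendsto (fun n : ℕ => C * (1 / 4 : ℝ) ^ n) Filter.atTop (nhds 0) := by
      have := tendsto_pow_atTop_nhds_zero_of_lt_one (by norm_num : (0:ℝ) ≤ 1/4)
        (by norm_num : (1/4 : ℝ) < 1)
      simpa using this.const_mul C
    exact squeeze_zero_norm hbound hg
  have := tendsto_nhds_unique key hzero
  linarith
end
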